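/- Let $N \ge 4$ be an even integer and let $0 \le i \le N/2 - 1$. Writing $\beta_{2k} := B_{2k}/(2k)!$, the following Bernoulli number identity holds: $\sum_{k=0}^{N/2 - 1 - \lfloor i/2 \rfloor} \beta_{2k}\,\beta_{N-2k}\binom{N-2k}{i} + \sum_{l=0}^{\lfloor i/2 \rfloor} \beta_{2l}\,\beta_{N-2l}\binom{N-2l}{i-2l+1} = 0$. -/

import Mathlib

open PowerSeries Finset Finset.Nat

noncomputable section StmtAux

def βq (k : ℕ) : ℚ := bernoulli k / k.factorial

abbrev Aq := PowerSeries ℚ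

def Dj (j : ℕ) : Aq := PowerSeries.mk fun r => βq (j + r) * ((j + r).choose j)

def Fxy : PowerSeries Aq := PowerSeries.mk Dj

lemma sum_beta_fac (n : ℕ) :
    ∑ st ∈ antidiagonal n, βq st.1 * (1 / (st.2.factorial : ℚ)) =
      βq n + if n = 1 then 1 else 0 := by
  rw [Finset.Nat.sum_antidiagonal_eq_sum_range_succ (fun s t => βq s * (1/(t.factorial:ℚ)))]
  have h1 : ∀ s ∈ Finset.range (n+1),
      βq s * (1/((n-s).factorial:ℚ)) = ((n.choose s : ℚ) * bernoulli s) / n.factorial := by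
    intro s hs
    rw [Finset.mem_range] at hs
    have hsn : s ≤ n := Nat.lt_succ_iff.mp hs
    have := Nat.choose_mul_factorial_mul_factorial hsn
    have h2 : ((n.choose s : ℚ)) * (s.factorial : ℚ) * ((n-s).factorial : ℚ) = (n.factorial : ℚ) := by
      exact_mod_cast congrArg (Nat.cast : ℕ → ℚ) this
    have hf1 : (s.factorial : ℚ) ≠ 0 := by exact_mod_cast s.factorial_ne_zero
    have hf2 : ((n-s).factorial : ℚ) ≠ 0 := by exact_mod_cast (n-s).factorial_ne_zero
    have hf3 : (n.factorial : ℚ) ≠ 0 := by exact_mod_cast n.factorial_ne_zero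
    rw [βq]
    field_simp
    linear_combination (-1 : ℚ) * bernoulli s * h2
  rw [Finset.sum_congr rfl h1]
  rw [← Finset.sum_div, Finset.sum_range_succ, sum_bernoulli n]
  have hf3 : (n.factorial : ℚ) ≠ 0 := by exact_mod_cast n.factorial_ne_zero
  rcases eq_or_ne n 1 with h | h
  · subst h; simp [βq]; ring
  · simp [h, βq, Nat.choose_self]

lemma core (j r : ℕ) :
    ∑ s ∈ Finset.range (j+1), ∑ p ∈ Finset.range (r+1),
      βq (s+p) * ((s+p).choose s : ℚ) * (1/((j-s).factorial : ℚ)) * (1/((r-p).factorial:ℚ))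
    = ((j+r).choose j : ℚ) * (βq (j+r) + if j + r = 1 then 1 else 0) := by
  set n := j + r with hn
  have step1 : ∀ s ∈ Finset.range (j+1), ∑ p ∈ Finset.range (r+1),
      βq (s+p) * ((s+p).choose s : ℚ) * (1/((j-s).factorial : ℚ)) * (1/((r-p).factorial:ℚ))
      = ∑ m ∈ Finset.range (n+1),
        βq m * ((m.choose s : ℚ) * ((n - m).choose (j-s) : ℚ)) * (1/((n-m).factorial : ℚ)) := by
    intro s hs
    rw [Finset.mem_range] at hs
    have hsj : s ≤ j := by omega
    have e1 : ∀ p ∈ Finset.range (r+1),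
        βq (s+p) * ((s+p).choose s : ℚ) * (1/((j-s).factorial : ℚ)) * (1/((r-p).factorial:ℚ))
        = βq (s+p) * (((s+p).choose s : ℚ) * ((n - (s+p)).choose (j-s) : ℚ)) * (1/((n-(s+p)).factorial : ℚ)) := by
      intro p hp
      rw [Finset.mem_range] at hp
      have hpr : p ≤ r := by omega
      have he : n - (s+p) = (j-s) + (r-p) := by omega
      rw [he]
      have hc := Nat.choose_mul_factorial_mul_factorial (Nat.le_add_right (j-s) (r-p))
      rw [Nat.add_sub_cancel_left] at hc
      have hc' : ((((j-s)+(r-p)).choose (j-s) : ℚ)) * ((j-s).factorial : ℚ) * ((r-p).factorial : ℚ)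
          = (((j-s)+(r-p)).factorial : ℚ) := by exact_mod_cast hc
      have h1 : ((j-s).factorial : ℚ) ≠ 0 := by exact_mod_cast Nat.factorial_ne_zero _
      have h2 : ((r-p).factorial : ℚ) ≠ 0 := by exact_mod_cast Nat.factorial_ne_zero _
      have h3 : ((((j-s)+(r-p))).factorial : ℚ) ≠ 0 := by exact_mod_cast Nat.factorial_ne_zero _
      field_simp
      linear_combination (-1 : ℚ) * (βq (s+p) * ((s+p).choose s : ℚ)) * hc'
    rw [Finset.sum_congr rfl e1]
    have e2 : ∑ p ∈ Finset.range (r+1),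
        βq (s+p) * (((s+p).choose s : ℚ) * ((n - (s+p)).choose (j-s) : ℚ)) * (1/((n-(s+p)).factorial : ℚ))
        = ∑ m ∈ Finset.Ico s (s + (r+1)),
        βq m * ((m.choose s : ℚ) * ((n - m).choose (j-s) : ℚ)) * (1/((n-m).factorial : ℚ)) := by
      rw [Finset.sum_Ico_eq_sum_range]
      simp only [Nat.add_sub_cancel_left]
    rw [e2]
    apply Finset.sum_subset
    · intro x hx
      rw [Finset.mem_Ico] at hx
      rw [Finset.mem_range]
      omega
    · intro x hx hx'
      rw [Finset.mem_range] at hx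
      rw [Finset.mem_Ico, not_and_or, not_le, not_lt] at hx'
      rcases hx' with h | h
      · rw [Nat.choose_eq_zero_of_lt h]
        simp
      · have : n - x < j - s := by omega
        rw [Nat.choose_eq_zero_of_lt this]
        simp
  rw [Finset.sum_congr rfl step1, Finset.sum_comm]
  have step3 : ∀ m ∈ Finset.range (n+1),
      ∑ s ∈ Finset.range (j+1),
        βq m * ((m.choose s : ℚ) * ((n - m).choose (j-s) : ℚ)) * (1/((n-m).factorial : ℚ))
      = (n.choose j : ℚ) * (βq m * (1/((n-m).factorial : ℚ))) := by
    intro m hm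
    rw [Finset.mem_range] at hm
    rw [← Finset.sum_mul, ← Finset.mul_sum]
    have hv := Nat.add_choose_eq m (n - m) j
    have hmn : m + (n - m) = n := by omega
    rw [hmn] at hv
    rw [Finset.Nat.sum_antidiagonal_eq_sum_range_succ (fun a b => m.choose a * (n-m).choose b)] at hv
    have : ∑ s ∈ Finset.range (j+1), ((m.choose s : ℚ) * ((n - m).choose (j-s) : ℚ))
        = (n.choose j : ℚ) := by exact_mod_cast (congrArg (Nat.cast : ℕ → ℚ) hv).symm
    rw [this]; ring
  rw [Finset.sum_congr rfl step3, ← Finset.mul_sum]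
  congr 1
  rw [← Finset.Nat.sum_antidiagonal_eq_sum_range_succ (fun a b => βq a * (1/(b.factorial : ℚ)))]
  exact sum_beta_fac n

lemma keyA (n : ℕ) :
    (∑ st ∈ antidiagonal n, Dj st.1 * (PowerSeries.C (R := ℚ)) (1/(st.2.factorial : ℚ))) * exp ℚ
    = Dj n + (if n = 1 then 1 else 0) + (if n = 0 then PowerSeries.X else 0) := by
  ext r
  rw [PowerSeries.coeff_mul]
  have e1 : ∀ pq ∈ antidiagonal r,
      (PowerSeries.coeff (R := ℚ) pq.1 (∑ st ∈ antidiagonal n, Dj st.1 * (PowerSeries.C (R := ℚ)) (1/(st.2.factorial : ℚ))))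
        * PowerSeries.coeff (R := ℚ) pq.2 (exp ℚ)
      = ∑ st ∈ antidiagonal n,
          βq (st.1 + pq.1) * (((st.1 + pq.1).choose st.1 : ℚ)) * (1/(st.2.factorial : ℚ)) * (1/(pq.2.factorial : ℚ)) := by
    intro pq _
    rw [map_sum, Finset.sum_mul]
    refine Finset.sum_congr rfl fun st _ => ?_
    rw [PowerSeries.coeff_mul_C, PowerSeries.coeff_exp, Dj, PowerSeries.coeff_mk]
    simp [mul_assoc]
  rw [Finset.sum_congr rfl e1]
  rw [Finset.Nat.sum_antidiagonal_eq_sum_range_succ_mk]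
  have e2 : ∀ k ∈ Finset.range (r+1),
      (∑ st ∈ antidiagonal n,
        βq (st.1 + k) * (((st.1 + k).choose st.1 : ℚ)) * (1/(st.2.factorial : ℚ)) * (1/((r-k).factorial : ℚ)))
      = ∑ s ∈ Finset.range (n+1),
        βq (s + k) * (((s + k).choose s : ℚ)) * (1/((n-s).factorial : ℚ)) * (1/((r-k).factorial : ℚ)) := by
    intro k _
    rw [Finset.Nat.sum_antidiagonal_eq_sum_range_succ_mk]
  rw [Finset.sum_congr rfl e2, Finset.sum_comm]
  have e3 : ∀ s ∈ Finset.range (n+1), ∀ k ∈ Finset.range (r+1),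
      βq (s + k) * (((s + k).choose s : ℚ)) * (1/((n-s).factorial : ℚ)) * (1/((r-k).factorial : ℚ))
      = βq (s + k) * (((s + k).choose s : ℚ)) * (1/((n-s).factorial : ℚ)) * (1/((r-k).factorial : ℚ)) := fun _ _ _ _ => rfl
  rw [show (∑ s ∈ Finset.range (n+1), ∑ k ∈ Finset.range (r+1),
      βq (s + k) * (((s + k).choose s : ℚ)) * (1/((n-s).factorial : ℚ)) * (1/((r-k).factorial : ℚ)))
    = ((n+r).choose n : ℚ) * (βq (n+r) + if n + r = 1 then 1 else 0) from core n r]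
  -- now RHS coefficients
  rw [map_add, map_add]
  rw [show (PowerSeries.coeff (R := ℚ) r) (Dj n) = βq (n + r) * ((n+r).choose n : ℚ) from by
    rw [Dj, PowerSeries.coeff_mk]]
  simp only [apply_ite (PowerSeries.coeff (R := ℚ) r), map_zero, PowerSeries.coeff_one,
    PowerSeries.coeff_X]
  rcases eq_or_ne (n + r) 1 with h | h
  · rw [if_pos h]
    have hc : (n = 1 ∧ r = 0) ∨ (n = 0 ∧ r = 1) := by omega
    rcases hc with ⟨h1, h2⟩ | ⟨h1, h2⟩ <;> subst h1 <;> subst h2 <;> norm_num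
  · rw [if_neg h]
    have e4 : (if n = 1 then (if r = 0 then (1:ℚ) else 0) else 0) = 0 := by
      split_ifs <;> first | rfl | (exfalso; omega)
    have e5 : (if n = 0 then (if r = 1 then (1:ℚ) else 0) else 0) = 0 := by
      split_ifs <;> first | rfl | (exfalso; omega)
    rw [e4, e5]; ring

lemma key1 : Fxy * (exp Aq * PowerSeries.C (R := Aq) (exp ℚ) - 1)
    = X + PowerSeries.C (R := Aq) PowerSeries.X := by
  ext n
  rw [mul_sub, mul_one, map_sub, ← mul_assoc, PowerSeries.coeff_mul_C, PowerSeries.coeff_mul]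
  have e1 : ∀ st ∈ antidiagonal n,
      PowerSeries.coeff (R := Aq) st.1 Fxy * PowerSeries.coeff (R := Aq) st.2 (exp Aq)
      = Dj st.1 * (PowerSeries.C (R := ℚ)) (1/(st.2.factorial : ℚ)) := by
    intro st _
    rw [Fxy, PowerSeries.coeff_mk, PowerSeries.coeff_exp]
    rw [show (algebraMap ℚ Aq) (1/(st.2.factorial : ℚ)) = (PowerSeries.C (R := ℚ)) (1/(st.2.factorial : ℚ)) from
      (PowerSeries.C_eq_algebraMap).symm]
  rw [Finset.sum_congr rfl e1, keyA n]
  have hF : PowerSeries.coeff (R := Aq) n Fxy = Dj n := by rw [Fxy, PowerSeries.coeff_mk]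
  rw [hF, map_add, PowerSeries.coeff_X, PowerSeries.coeff_C]
  ring

lemma hxy : PowerSeries.C (R := Aq) (bernoulliPowerSeries ℚ) * (PowerSeries.C (R := Aq) (exp ℚ) - 1)
    = PowerSeries.C (R := Aq) PowerSeries.X := by
  rw [← map_one (PowerSeries.C (R := Aq)), ← map_sub, ← map_mul]
  exact congrArg _ (bernoulliPowerSeriesMulExp)
  where bernoulliPowerSeriesMulExp : bernoulliPowerSeries ℚ * (exp ℚ - 1) = PowerSeries.X :=
    bernoulliPowerSeries_mul_exp_sub_one ℚ

lemma star :
    Fxy * (X * PowerSeries.C (R := Aq) PowerSeries.X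
        + X * PowerSeries.C (R := Aq) (bernoulliPowerSeries ℚ)
        + PowerSeries.C (R := Aq) PowerSeries.X * bernoulliPowerSeries Aq)
    = (X + PowerSeries.C (R := Aq) PowerSeries.X)
        * (bernoulliPowerSeries Aq * PowerSeries.C (R := Aq) (bernoulliPowerSeries ℚ)) := by
  have hbx : bernoulliPowerSeries Aq * (exp Aq - 1) = X := bernoulliPowerSeries_mul_exp_sub_one Aq
  calc Fxy * (X * PowerSeries.C (R := Aq) PowerSeries.X
        + X * PowerSeries.C (R := Aq) (bernoulliPowerSeries ℚ)
        + PowerSeries.C (R := Aq) PowerSeries.X * bernoulliPowerSeries Aq)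
      = Fxy * (exp Aq * PowerSeries.C (R := Aq) (exp ℚ) - 1)
          * (bernoulliPowerSeries Aq * PowerSeries.C (R := Aq) (bernoulliPowerSeries ℚ)) := by
        rw [← hbx, ← hxy]; ring
    _ = (X + PowerSeries.C (R := Aq) PowerSeries.X)
        * (bernoulliPowerSeries Aq * PowerSeries.C (R := Aq) (bernoulliPowerSeries ℚ)) := by rw [key1]

lemma coeff_bps (A : Type*) [CommRing A] [Algebra ℚ A] (n : ℕ) :
    PowerSeries.coeff (R := A) n (bernoulliPowerSeries A) = algebraMap ℚ A (βq n) := by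
  rw [bernoulliPowerSeries, PowerSeries.coeff_mk, βq]

lemma daggerA (i : ℕ) :
    Dj i * PowerSeries.X + Dj i * bernoulliPowerSeries ℚ
      + (∑ st ∈ antidiagonal (i+1), Dj st.1 * PowerSeries.C (R := ℚ) (βq st.2)) * PowerSeries.X
    = PowerSeries.C (R := ℚ) (βq i) * bernoulliPowerSeries ℚ
      + PowerSeries.C (R := ℚ) (βq (i+1)) * bernoulliPowerSeries ℚ * PowerSeries.X := by
  have h := congrArg (PowerSeries.coeff (R := Aq) (i+1)) star
  rw [show Fxy * (X * PowerSeries.C (R := Aq) PowerSeries.X + X * PowerSeries.C (R := Aq) (bernoulliPowerSeries ℚ)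
      + PowerSeries.C (R := Aq) PowerSeries.X * bernoulliPowerSeries Aq)
      = X * (Fxy * PowerSeries.C (R := Aq) PowerSeries.X) + X * (Fxy * PowerSeries.C (R := Aq) (bernoulliPowerSeries ℚ))
      + (Fxy * bernoulliPowerSeries Aq) * PowerSeries.C (R := Aq) PowerSeries.X from by ring] at h
  rw [show (X + PowerSeries.C (R := Aq) PowerSeries.X) * (bernoulliPowerSeries Aq * PowerSeries.C (R := Aq) (bernoulliPowerSeries ℚ))
      = X * (bernoulliPowerSeries Aq * PowerSeries.C (R := Aq) (bernoulliPowerSeries ℚ))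
      + (bernoulliPowerSeries Aq * PowerSeries.C (R := Aq) (bernoulliPowerSeries ℚ)) * PowerSeries.C (R := Aq) PowerSeries.X from by ring] at h
  simp only [map_add, PowerSeries.coeff_succ_X_mul, PowerSeries.coeff_mul_C] at h
  rw [PowerSeries.coeff_mul] at h
  simp only [Fxy, PowerSeries.coeff_mk] at h
  have e1 : ∀ st ∈ antidiagonal (i+1),
      Dj st.1 * PowerSeries.coeff (R := Aq) st.2 (bernoulliPowerSeries Aq)
      = Dj st.1 * PowerSeries.C (R := ℚ) (βq st.2) := by
    intro st _
    rw [coeff_bps, ← PowerSeries.C_eq_algebraMap]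
  rw [Finset.sum_congr rfl e1] at h
  rw [coeff_bps, coeff_bps, ← PowerSeries.C_eq_algebraMap, ← PowerSeries.C_eq_algebraMap] at h
  exact h

lemma coeff_bq (n : ℕ) : PowerSeries.coeff (R := ℚ) n (bernoulliPowerSeries ℚ) = βq n := by
  rw [coeff_bps]; simp

lemma dagger (i b' : ℕ) :
    βq (i + b') * ((i + b').choose i : ℚ)
    + ∑ k ∈ Finset.range (b' + 2), βq k * βq (i + b' + 1 - k) * (((i + b' + 1 - k).choose i : ℚ))
    + ∑ t ∈ Finset.range (i + 2), βq t * βq (i + b' + 1 - t) * (((i + b' + 1 - t).choose (i + 1 - t) : ℚ))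
    = βq i * βq (b' + 1) + βq (i + 1) * βq b' := by
  have h := congrArg (PowerSeries.coeff (R := ℚ) (b' + 1)) (daggerA i)
  simp only [map_add, PowerSeries.coeff_succ_mul_X, PowerSeries.coeff_C_mul, coeff_bq] at h
  rw [PowerSeries.coeff_mul] at h
  simp only [Dj, PowerSeries.coeff_mk, coeff_bq, map_sum, PowerSeries.coeff_mul_C] at h
  -- massage sum 1 (over antidiagonal (b'+1))
  rw [Finset.Nat.sum_antidiagonal_eq_sum_range_succ
    (fun a b => βq (i + a) * ((i + a).choose i : ℚ) * βq b)] at h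
  rw [Finset.Nat.sum_antidiagonal_eq_sum_range_succ
    (fun a b => βq (a + b') * ((a + b').choose a : ℚ) * βq b)] at h
  have e1 : ∑ k ∈ Finset.range (b' + 2), βq k * βq (i + b' + 1 - k) * (((i + b' + 1 - k).choose i : ℚ))
      = ∑ k ∈ Finset.range (b' + 2), βq (i + k) * (((i + k).choose i : ℚ)) * βq (b' + 1 - k) := by
    rw [← Finset.sum_range_reflect]
    refine Finset.sum_congr rfl fun j hj => ?_
    rw [Finset.mem_range] at hj
    have h1 : i + b' + 1 - (b' + 1 - j) = i + j := by omega
    have h0 : b' + 2 - 1 - j = b' + 1 - j := by omega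
    rw [h0, h1]
    ring
  have e2 : ∑ t ∈ Finset.range (i + 2), βq t * βq (i + b' + 1 - t) * (((i + b' + 1 - t).choose (i + 1 - t) : ℚ))
      = ∑ k ∈ Finset.range (i + 2), βq (k + b') * (((k + b').choose k : ℚ)) * βq (i + 1 - k) := by
    rw [← Finset.sum_range_reflect]
    refine Finset.sum_congr rfl fun j hj => ?_
    rw [Finset.mem_range] at hj
    have h1 : i + b' + 1 - (i + 1 - j) = j + b' := by omega
    have h2 : i + 1 - (i + 1 - j) = j := by omega
    have h0 : i + 2 - 1 - j = i + 1 - j := by omega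
    rw [h0, h1, h2]
    ring
  rw [e1, e2]
  linarith [h]

lemma sum_range_even' (n : ℕ) (f : ℕ → ℚ) (h : ∀ k < n, Odd k → f k = 0) :
    ∑ k ∈ Finset.range n, f k = ∑ l ∈ Finset.range ((n+1)/2), f (2*l) := by
  induction n with
  | zero => simp
  | succ m ih =>
    rw [Finset.sum_range_succ, ih (fun k hk hodd => h k (by omega) hodd)]
    rcases Nat.even_or_odd m with he | ho
    · obtain ⟨t, ht⟩ := he
      have h1 : (m+1+1)/2 = (m+1)/2 + 1 := by omega
      rw [h1, Finset.sum_range_succ]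
      have h2 : 2 * ((m+1)/2) = m := by omega
      rw [h2]
    · obtain ⟨t, ht⟩ := ho
      have h1 : (m+1+1)/2 = (m+1)/2 := by omega
      rw [h1, h m (by omega) ⟨t, ht⟩, add_zero]

lemma hβodd : ∀ m, Odd m → 3 ≤ m → βq m = 0 := fun m hm h3 => by
  rw [βq, bernoulli, bernoulli'_eq_zero_of_odd hm (by omega)]
  simp

end StmtAux

/-- For even `N ≥ 4` and `0 ≤ i ≤ N/2 - 1`, writing `β_{2k} = B_{2k}/(2k)!`,
`∑_{k=0}^{N/2-1-⌊i/2⌋} β_{2k} β_{N-2k} C(N-2k, i)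
  + ∑_{l=0}^{⌊i/2⌋} β_{2l} β_{N-2l} C(N-2l, i-2l+1) = 0`. -/
theorem stmt3 (N : ℕ) (hN : 4 ≤ N) (hNe : Even N) (i : ℕ) (hi : i ≤ N / 2 - 1) :
    ∑ k ∈ Finset.range (N / 2 - 1 - i / 2 + 1),
        (bernoulli (2 * k) / (2 * k).factorial) *
          (bernoulli (N - 2 * k) / (N - 2 * k).factorial) * ((N - 2 * k).choose i)
      + ∑ l ∈ Finset.range (i / 2 + 1),
          (bernoulli (2 * l) / (2 * l).factorial) *
            (bernoulli (N - 2 * l) / (N - 2 * l).factorial) *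
              ((N - 2 * l).choose (i - 2 * l + 1))
      = 0 := by
  have hN2 : N % 2 = 0 := Nat.even_iff.mp hNe
  set b' := N - 1 - i with hb'
  have hiN : i + b' + 1 = N := by omega
  have hNodd : Odd (N - 1) := ⟨N/2 - 1, by omega⟩
  have hβN1 : βq (i + b') = 0 := by
    have : i + b' = N - 1 := by omega
    rw [this]; exact hβodd _ hNodd (by omega)
  have h := dagger i b'
  rw [hβN1, zero_mul, zero_add] at h
  -- parity reduction of the two sums
  have hs1 : ∑ k ∈ Finset.range (b' + 2), βq k * βq (i + b' + 1 - k) * (((i + b' + 1 - k).choose i : ℚ))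
      = ∑ l ∈ Finset.range ((b' + 3)/2), βq (2*l) * βq (i + b' + 1 - 2*l) * (((i + b' + 1 - 2*l).choose i : ℚ)) := by
    have := sum_range_even' (b' + 2) (fun k => βq k * βq (i + b' + 1 - k) * (((i + b' + 1 - k).choose i : ℚ)))
      (fun k hk hodd => by
        show βq k * βq (i + b' + 1 - k) * (((i + b' + 1 - k).choose i : ℚ)) = 0
        rcases eq_or_ne k 1 with rfl | hne
        · have e : i + b' + 1 - 1 = i + b' := by omega
          simp only [e, hβN1, mul_zero, zero_mul]
        · have : 3 ≤ k := by
            rcases hodd with ⟨t, ht⟩; omega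
          rw [hβodd k hodd this, zero_mul, zero_mul])
    simpa using this
  have hs2 : ∑ t ∈ Finset.range (i + 2), βq t * βq (i + b' + 1 - t) * (((i + b' + 1 - t).choose (i + 1 - t) : ℚ))
      = ∑ l ∈ Finset.range ((i + 3)/2), βq (2*l) * βq (i + b' + 1 - 2*l) * (((i + b' + 1 - 2*l).choose (i + 1 - 2*l) : ℚ)) := by
    have := sum_range_even' (i + 2) (fun t => βq t * βq (i + b' + 1 - t) * (((i + b' + 1 - t).choose (i + 1 - t) : ℚ)))
      (fun k hk hodd => by
        show βq k * βq (i + b' + 1 - k) * (((i + b' + 1 - k).choose (i + 1 - k) : ℚ)) = 0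
        rcases eq_or_ne k 1 with rfl | hne
        · have e : i + b' + 1 - 1 = i + b' := by omega
          simp only [e, hβN1, mul_zero, zero_mul]
        · have : 3 ≤ k := by
            rcases hodd with ⟨t, ht⟩; omega
          rw [hβodd k hodd this, zero_mul, zero_mul])
    simpa using this
  rw [hs1, hs2] at h
  -- identify goal sums with βq-form sums
  have goal1 : ∑ k ∈ Finset.range (N / 2 - 1 - i / 2 + 1),
        (bernoulli (2 * k) / (2 * k).factorial) *
          (bernoulli (N - 2 * k) / (N - 2 * k).factorial) * ((N - 2 * k).choose i : ℚ)
      = ∑ l ∈ Finset.range (N / 2 - 1 - i / 2 + 1), βq (2*l) * βq (i + b' + 1 - 2*l) * (((i + b' + 1 - 2*l).choose i : ℚ)) := by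
    refine Finset.sum_congr rfl fun l hl => ?_
    rw [hiN, βq, βq]
  have goal2 : ∑ l ∈ Finset.range (i / 2 + 1),
          (bernoulli (2 * l) / (2 * l).factorial) *
            (bernoulli (N - 2 * l) / (N - 2 * l).factorial) * ((N - 2 * l).choose (i - 2 * l + 1) : ℚ)
      = ∑ l ∈ Finset.range (i / 2 + 1), βq (2*l) * βq (i + b' + 1 - 2*l) * (((i + b' + 1 - 2*l).choose (i + 1 - 2*l) : ℚ)) := by
    refine Finset.sum_congr rfl fun l hl => ?_
    rw [Finset.mem_range] at hl
    have e : i + 1 - 2*l = i - 2*l + 1 := by omega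
    rw [hiN, e, βq, βq]
  rw [goal1, goal2]
  rcases Nat.even_or_odd i with hie | hio
  · -- i even
    have hi2 : i % 2 = 0 := Nat.even_iff.mp hie
    have hr1 : (b' + 3)/2 = (N / 2 - 1 - i / 2 + 1) + 1 := by omega
    have hr2 : (i + 3)/2 = i / 2 + 1 := by omega
    rw [hr1, hr2, Finset.sum_range_succ] at h
    -- the peeled term equals βq i * βq (b' + 1)
    have hpe : βq (2*(N / 2 - 1 - i / 2 + 1)) * βq (i + b' + 1 - 2*(N / 2 - 1 - i / 2 + 1))
        * (((i + b' + 1 - 2*(N / 2 - 1 - i / 2 + 1)).choose i : ℚ)) = βq i * βq (b' + 1) := by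
      have e1 : 2*(N / 2 - 1 - i / 2 + 1) = b' + 1 := by omega
      have e2 : i + b' + 1 - 2*(N / 2 - 1 - i / 2 + 1) = i := by omega
      rw [e2, e1, Nat.choose_self]
      push_cast; ring
    rw [hpe] at h
    -- remaining RHS term is zero
    have hz : βq (i + 1) * βq b' = 0 := by
      rcases eq_or_ne i 0 with rfl | hne
      · have e : b' = N - 1 := by omega
        rw [e, hβodd _ hNodd (by omega), mul_zero]
      · rw [hβodd (i+1) (by exact Even.add_one hie) (by omega), zero_mul]
    rw [hz, add_zero] at h
    linarith [h]
  · -- i odd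
    have hi2 : i % 2 = 1 := Nat.odd_iff.mp hio
    have hr1 : (b' + 3)/2 = N / 2 - 1 - i / 2 + 1 := by omega
    have hr2 : (i + 3)/2 = (i / 2 + 1) + 1 := by omega
    rw [hr2, Finset.sum_range_succ, hr1] at h
    have hpe : βq (2*(i / 2 + 1)) * βq (i + b' + 1 - 2*(i / 2 + 1))
        * (((i + b' + 1 - 2*(i / 2 + 1)).choose (i + 1 - 2*(i / 2 + 1)) : ℚ)) = βq (i + 1) * βq b' := by
      have e1 : 2*(i / 2 + 1) = i + 1 := by omega
      have e2 : i + b' + 1 - 2*(i / 2 + 1) = b' := by omega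
      have e3 : i + 1 - 2*(i / 2 + 1) = 0 := by omega
      rw [e2, e3, e1, Nat.choose_zero_right]
      push_cast; ring
    rw [hpe] at h
    have hz : βq i * βq (b' + 1) = 0 := by
      rcases eq_or_ne i 1 with rfl | hne
      · have e : b' + 1 = N - 1 := by omega
        rw [e, hβodd _ hNodd (by omega), mul_zero]
      · rw [hβodd i hio (by omega), zero_mul]
    rw [hz, zero_add] at h
    linarith [h]
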